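/- Let Z be a finite set with |Z| = D ≥ 1, let γ > 1 with A the γ-diagonal matrix on Z, and let 1 ≤ m ≤ n. Fix z ∈ Z^n. Let (I_1,…,I_m) be a uniformly random injective m-tuple with entries in {1,…,n}, let z̃ = (z_{I_1},…,z_{I_m}), and given z̃ let Ŵ = (Ŵ_1,…,Ŵ_m) have independent components with P(Ŵ_i = w) = A[w, z̃_i]. Then the expected ℓ2-norm error of the type estimate satisfies E‖A⁻¹·T_{Ŵ} − T_z‖₂ ≤ (c·√D + 1)/√m, where c = 1 + D/(γ − 1) is the ℓ2 condition number of A. -/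

import Mathlib

open Finset Matrix

/-- The γ-diagonal PRAM matrix on a finite alphabet `Z`. -/
noncomputable def gammaDiag {Z : Type*} [Fintype Z] [DecidableEq Z] (γ : ℝ) (w z : Z) : ℝ :=
  if w = z then γ / (γ + (Fintype.card Z : ℝ) - 1) else 1 / (γ + (Fintype.card Z : ℝ) - 1)

/-- The type (empirical distribution) of a sequence `z ∈ Z^n`. -/
noncomputable def typeOf {Z : Type*} [DecidableEq Z] {n : ℕ} (z : Fin n → Z) : Z → ℝ :=
  fun a => ((Finset.univ.filter fun i => z i = a).card : ℝ) / n

/-- The set of injective `m`-tuples with entries in `{1,…,n}`. -/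
def Theta (m n : ℕ) : Finset (Fin m → Fin n) :=
  Finset.univ.filter Function.Injective

set_option linter.unusedSectionVars false
set_option maxHeartbeats 2000000

section Aux

lemma mem_Theta {m n : ℕ} {π : Fin m → Fin n} : π ∈ Theta m n ↔ Function.Injective π := by
  simp [Theta]

lemma Theta_nonempty {m n : ℕ} (hmn : m ≤ n) : (Theta m n).Nonempty := by
  refine ⟨fun i => Fin.castLE hmn i, ?_⟩
  rw [mem_Theta]
  exact fun a b hab => Fin.castLE_injective hmn hab

lemma exists_perm_pair {n : ℕ} {j l j' l' : Fin n} (hjl : j ≠ l) (hjl' : j' ≠ l') :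
    ∃ σ : Equiv.Perm (Fin n), σ j = j' ∧ σ l = l' := by
  have h1 : (Equiv.swap j j') j = j' := Equiv.swap_apply_left _ _
  have h2 : (Equiv.swap j j') l ≠ j' := by
    intro h
    exact hjl ((Equiv.swap j j').injective (h.trans h1.symm)).symm
  refine ⟨(Equiv.swap j j').trans (Equiv.swap ((Equiv.swap j j') l) l'), ?_, ?_⟩
  · simp only [Equiv.trans_apply, h1]
    exact Equiv.swap_apply_of_ne_of_ne (Ne.symm h2) hjl'
  · simp only [Equiv.trans_apply]
    exact Equiv.swap_apply_left _ _

lemma card_fiber_pair_eq {m n : ℕ} (i k : Fin m) {j l j' l' : Fin n}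
    (hjl : j ≠ l) (hjl' : j' ≠ l') :
    ((Theta m n).filter fun π => π i = j ∧ π k = l).card
      = ((Theta m n).filter fun π => π i = j' ∧ π k = l').card := by
  obtain ⟨σ, hσ1, hσ2⟩ := exists_perm_pair hjl hjl'
  apply Finset.card_bij' (fun π _ => σ ∘ π) (fun π _ => σ.symm ∘ π)
  · intro π hπ
    rw [Finset.mem_filter] at hπ ⊢
    refine ⟨mem_Theta.mpr (σ.injective.comp (mem_Theta.mp hπ.1)), ?_, ?_⟩
    · simp [Function.comp, hπ.2.1, hσ1]
    · simp [Function.comp, hπ.2.2, hσ2]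
  · intro π hπ
    rw [Finset.mem_filter] at hπ ⊢
    refine ⟨mem_Theta.mpr (σ.symm.injective.comp (mem_Theta.mp hπ.1)), ?_, ?_⟩
    · simp [Function.comp, hπ.2.1, ← hσ1]
    · simp [Function.comp, hπ.2.2, ← hσ2]
  · intro π _; funext x; simp
  · intro π _; funext x; simp

lemma card_fiber_single_eq {m n : ℕ} (i : Fin m) (j j' : Fin n) :
    ((Theta m n).filter fun π => π i = j).card
      = ((Theta m n).filter fun π => π i = j').card := by
  set σ := Equiv.swap j j' with hσ
  apply Finset.card_bij' (fun π _ => σ ∘ π) (fun π _ => σ.symm ∘ π)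
  · intro π hπ
    rw [Finset.mem_filter] at hπ ⊢
    refine ⟨mem_Theta.mpr (σ.injective.comp (mem_Theta.mp hπ.1)), ?_⟩
    simp [Function.comp, hπ.2, hσ]
  · intro π hπ
    rw [Finset.mem_filter] at hπ ⊢
    refine ⟨mem_Theta.mpr (σ.symm.injective.comp (mem_Theta.mp hπ.1)), ?_⟩
    simp [Function.comp, hπ.2, hσ, Equiv.symm_swap, Equiv.swap_apply_right]
  · intro π _; funext x; simp
  · intro π _; funext x; simp

set_option maxHeartbeats 2000000 in
lemma sum_theta_single {m n : ℕ} (hm : 1 ≤ m) (hmn : m ≤ n) (i : Fin m) (g : Fin n → ℝ) :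
    ∑ π ∈ Theta m n, g (π i)
      = ((Theta m n).card : ℝ) / n * ∑ j, g j := by
  have hn : 0 < n := lt_of_lt_of_le hm hmn
  have hn0 : ((n:ℝ)) ≠ 0 := Nat.cast_ne_zero.mpr hn.ne'
  set C : ℕ := ((Theta m n).filter fun π => π i = ⟨0, hn⟩).card with hC
  have hfib : ∀ j : Fin n, ((Theta m n).filter fun π => π i = j).card = C :=
    fun j => card_fiber_single_eq i j ⟨0, hn⟩
  have hfw := Finset.sum_fiberwise_of_maps_to (s := Theta m n)
    (t := (Finset.univ : Finset (Fin n))) (g := fun π => π i)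
    (fun π _ => Finset.mem_univ _) (fun π => g (π i))
  have hsplit : ∑ π ∈ Theta m n, g (π i) = ∑ j, (C : ℝ) * g j := by
    rw [← hfw]
    apply Finset.sum_congr rfl
    intro j _
    rw [Finset.sum_congr rfl (fun π hπ => by rw [(Finset.mem_filter.mp hπ).2]),
      Finset.sum_const, nsmul_eq_mul, hfib j]
  have hcf := Finset.card_eq_sum_card_fiberwise (f := fun π => π i)
    (s := Theta m n) (t := (Finset.univ : Finset (Fin n))) (fun π _ => Finset.mem_univ _)
  have hcard : ((Theta m n).card : ℝ) = n * C := by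
    rw [hcf]
    push_cast
    rw [Finset.sum_congr rfl fun j _ => by rw [hfib j]]
    simp [mul_comm]
  rw [hsplit, hcard, ← Finset.mul_sum]
  field_simp

lemma sum_theta_pair {m n : ℕ} (hmn : m ≤ n) (i k : Fin m) (hik : i ≠ k)
    (F : Fin n → Fin n → ℝ) :
    ∑ π ∈ Theta m n, F (π i) (π k)
      = ((Theta m n).card : ℝ) / (n * (n - 1))
        * ∑ q ∈ Finset.univ.offDiag, F q.1 q.2 := by
  have hm2 : 2 ≤ m := by
    rcases Nat.lt_or_ge m 2 with h | h
    · exfalso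
      have hi := i.isLt
      have hk := k.isLt
      have : i = k := Fin.ext (by omega)
      exact hik this
    · exact h
  have hn2 : 2 ≤ n := le_trans hm2 hmn
  have hj0 : (⟨0, by omega⟩ : Fin n) ≠ ⟨1, by omega⟩ := by simp [Fin.ext_iff]
  set C : ℕ := ((Theta m n).filter fun π => π i = ⟨0, by omega⟩ ∧ π k = ⟨1, by omega⟩).card with hC
  have hfib : ∀ q ∈ (Finset.univ : Finset (Fin n)).offDiag,
      ((Theta m n).filter fun π => (π i, π k) = q).card = C := by
    rintro ⟨j, l⟩ hq
    rw [Finset.mem_offDiag] at hq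
    have heq : ((Theta m n).filter fun π => (π i, π k) = (j, l))
        = ((Theta m n).filter fun π => π i = j ∧ π k = l) := by
      apply Finset.filter_congr; intro π _; simp [Prod.ext_iff]
    rw [heq]
    exact card_fiber_pair_eq i k hq.2.2 hj0
  have hmaps : ∀ π ∈ Theta m n, (π i, π k) ∈ (Finset.univ : Finset (Fin n)).offDiag := by
    intro π hπ
    rw [Finset.mem_offDiag]
    exact ⟨Finset.mem_univ _, Finset.mem_univ _, fun h => hik ((mem_Theta.mp hπ) h)⟩
  have hfw := Finset.sum_fiberwise_of_maps_to (s := Theta m n)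
    (t := (Finset.univ : Finset (Fin n)).offDiag) (g := fun π => (π i, π k))
    hmaps (fun π => F (π i) (π k))
  have hsplit : ∑ π ∈ Theta m n, F (π i) (π k)
      = ∑ q ∈ Finset.univ.offDiag, (C : ℝ) * F q.1 q.2 := by
    rw [← hfw]
    apply Finset.sum_congr rfl
    intro q hq
    have hcg : ∀ π ∈ (Theta m n).filter fun π => (π i, π k) = q,
        F (π i) (π k) = F q.1 q.2 := by
      intro π hπ
      have h := (Finset.mem_filter.mp hπ).2
      rw [← h]
    rw [Finset.sum_congr rfl hcg, Finset.sum_const, nsmul_eq_mul, hfib q hq]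
  have hodcard : (((Finset.univ : Finset (Fin n)).offDiag.card) : ℝ) = n * (n - 1) := by
    rw [Finset.offDiag_card]
    have h : (Finset.univ : Finset (Fin n)).card = n := by simp
    rw [h]
    have hle : n ≤ n * n := by nlinarith
    push_cast [Nat.cast_sub hle]
    ring
  have hcf := Finset.card_eq_sum_card_fiberwise (f := fun π => (π i, π k))
    (s := Theta m n) (t := (Finset.univ : Finset (Fin n)).offDiag) (fun π hπ => hmaps π hπ)
  have hcard : ((Theta m n).card : ℝ) = (n * ((n:ℝ) - 1)) * C := by
    rw [hcf]
    push_cast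
    rw [Finset.sum_congr rfl fun q hq => by rw [hfib q hq]]
    rw [Finset.sum_const, nsmul_eq_mul, hodcard]
  have hn1 : (0:ℝ) < (n:ℝ) * ((n:ℝ) - 1) := by
    have h : (2:ℝ) ≤ n := by exact_mod_cast hn2
    nlinarith
  rw [hsplit, hcard, ← Finset.mul_sum]
  have hn1' : (n:ℝ) - 1 ≠ 0 := (by have h : (2:ℝ) ≤ n := by exact_mod_cast hn2
                                   linarith : (n:ℝ) - 1 > 0).ne'
  field_simp

noncomputable def Bmat (Z : Type*) [Fintype Z] [DecidableEq Z] (γ : ℝ) : Matrix Z Z ℝ :=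
  Matrix.of fun w x => if w = x then (γ + (Fintype.card Z : ℝ) - 2) / (γ - 1) else (-1) / (γ - 1)

variable {Z : Type*} [Fintype Z] [DecidableEq Z]

lemma AB_eq_one (hD : 1 ≤ Fintype.card Z) {γ : ℝ} (hγ : 1 < γ) :
    (Matrix.of (gammaDiag γ) : Matrix Z Z ℝ) * Bmat Z γ = 1 := by
  set D : ℝ := (Fintype.card Z : ℝ) with hDdef
  have hD1 : (1:ℝ) ≤ D := by simpa [hDdef] using (Nat.one_le_cast.mpr hD : (1:ℝ) ≤ _)
  have hq : (0:ℝ) < γ + D - 1 := by linarith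
  have hγ1 : (0:ℝ) < γ - 1 := by linarith
  ext a b
  rw [Matrix.mul_apply]
  have key : ∀ x : Z, (Matrix.of (gammaDiag γ) : Matrix Z Z ℝ) a x * Bmat Z γ x b
      = ((-1) + (γ + D - 1) * (if x = b then 1 else 0) - (γ - 1) * (if x = a then 1 else 0)
          + (γ + D - 1) * (γ - 1) * ((if x = a then 1 else 0) * (if x = b then 1 else 0)))
        / ((γ + D - 1) * (γ - 1)) := by
    intro x
    simp only [Matrix.of_apply, gammaDiag, Bmat, ← hDdef]
    rcases eq_or_ne a x with hxa | hxa
    · subst hxa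
      rcases eq_or_ne a b with hab | hab
      · subst hab; simp; field_simp; ring
      · simp [hab, Ne.symm hab]; field_simp; ring
    · rcases eq_or_ne x b with hxb | hxb
      · subst hxb
        simp [hxa, Ne.symm hxa]; field_simp; ring
      · simp [hxa, Ne.symm hxa, hxb]; field_simp
  rw [Finset.sum_congr rfl fun x _ => key x, ← Finset.sum_div]
  have h3 : ∑ x : Z, ((if x = a then (1:ℝ) else 0) * (if x = b then 1 else 0))
      = if a = b then 1 else 0 := by
    have hterm : ∀ x : Z, (if x = a then (1:ℝ) else 0) * (if x = b then 1 else 0)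
        = if x = a then (if a = b then (1:ℝ) else 0) else 0 := by
      intro x
      rcases eq_or_ne x a with hx | hx
      · subst hx
        rcases eq_or_ne x b with h2 | h2 <;> simp [h2]
      · simp [hx]
    rw [Finset.sum_congr rfl fun x _ => hterm x, Finset.sum_ite_eq' Finset.univ a]
    simp
  have hsum : ∑ x : Z, ((-1) + (γ + D - 1) * (if x = b then 1 else 0)
      - (γ - 1) * (if x = a then 1 else 0)
      + (γ + D - 1) * (γ - 1) * ((if x = a then 1 else 0) * (if x = b then 1 else 0)))
      = (γ + D - 1) * (γ - 1) * (if a = b then 1 else 0) := by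
    have h1 : ∑ x : Z, (if x = b then (1:ℝ) else 0) = 1 := by simp
    have h2 : ∑ x : Z, (if x = a then (1:ℝ) else 0) = 1 := by simp
    simp only [Finset.sum_add_distrib, Finset.sum_sub_distrib, ← Finset.mul_sum, h1, h2, h3,
      Finset.sum_const, Finset.card_univ, nsmul_eq_mul, mul_one]
    rw [← hDdef]; ring
  rw [hsum]
  have hne : (γ + D - 1) * (γ - 1) ≠ 0 := ne_of_gt (mul_pos hq hγ1)
  rcases eq_or_ne a b with hab | hab
  · simp [hab, Matrix.one_apply, mul_one, div_self hne]
  · simp [hab, Matrix.one_apply]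

section NormLemmas

noncomputable def nrm {Z : Type*} [Fintype Z] (v : Z → ℝ) : ℝ := Real.sqrt (∑ w, v w ^ 2)


lemma nrm_eq_norm (v : Z → ℝ) :
    nrm v = ‖(WithLp.equiv 2 (Z → ℝ)).symm v‖ := by
  rw [EuclideanSpace.norm_eq]
  simp [nrm, Real.norm_eq_abs, sq_abs]

lemma nrm_nonneg (v : Z → ℝ) : 0 ≤ nrm v := Real.sqrt_nonneg _

lemma nrm_triangle (v u : Z → ℝ) : nrm (v + u) ≤ nrm v + nrm u := by
  rw [nrm_eq_norm, nrm_eq_norm, nrm_eq_norm]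
  exact norm_add_le _ _

lemma nrm_sq (v : Z → ℝ) : nrm v ^ 2 = ∑ w, v w ^ 2 :=
  Real.sq_sqrt (Finset.sum_nonneg fun _ _ => sq_nonneg _)

/-- Jensen: `E √f ≤ √(E f)` for a probability vector `P`. -/
lemma sum_sqrt_le {ι : Type*} (s : Finset ι) (P f : ι → ℝ) (hP : ∀ i ∈ s, 0 ≤ P i)
    (hP1 : ∑ i ∈ s, P i = 1) (hf : ∀ i ∈ s, 0 ≤ f i) :
    ∑ i ∈ s, P i * Real.sqrt (f i) ≤ Real.sqrt (∑ i ∈ s, P i * f i) := by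
  have h : ∀ i ∈ s, P i * Real.sqrt (f i) = Real.sqrt (P i) * Real.sqrt (P i * f i) := by
    intro i hi
    rw [Real.sqrt_mul (hP i hi), ← mul_assoc, Real.mul_self_sqrt (hP i hi)]
  rw [Finset.sum_congr rfl h]
  have hnn : 0 ≤ ∑ i ∈ s, Real.sqrt (P i) * Real.sqrt (P i * f i) :=
    Finset.sum_nonneg fun i _ => mul_nonneg (Real.sqrt_nonneg _) (Real.sqrt_nonneg _)
  have hsq : (∑ i ∈ s, Real.sqrt (P i) * Real.sqrt (P i * f i)) ^ 2 ≤ ∑ i ∈ s, P i * f i := by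
    calc (∑ i ∈ s, Real.sqrt (P i) * Real.sqrt (P i * f i)) ^ 2
        ≤ (∑ i ∈ s, Real.sqrt (P i) ^ 2) * ∑ i ∈ s, Real.sqrt (P i * f i) ^ 2 :=
          Finset.sum_mul_sq_le_sq_mul_sq s _ _
      _ = (∑ i ∈ s, P i) * ∑ i ∈ s, P i * f i := by
          rw [Finset.sum_congr rfl fun i hi => Real.sq_sqrt (hP i hi),
            Finset.sum_congr rfl fun i hi => Real.sq_sqrt (mul_nonneg (hP i hi) (hf i hi))]
      _ = ∑ i ∈ s, P i * f i := by rw [hP1, one_mul]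
  calc ∑ i ∈ s, Real.sqrt (P i) * Real.sqrt (P i * f i)
      = Real.sqrt ((∑ i ∈ s, Real.sqrt (P i) * Real.sqrt (P i * f i)) ^ 2) :=
        (Real.sqrt_sq hnn).symm
    _ ≤ Real.sqrt (∑ i ∈ s, P i * f i) := Real.sqrt_le_sqrt hsq

/-- Frobenius-norm bound on `mulVec`. -/
lemma nrm_mulVec_le (B : Matrix Z Z ℝ) (v : Z → ℝ) :
    nrm (B.mulVec v) ≤ Real.sqrt (∑ a, ∑ b, B a b ^ 2) * nrm v := by
  rw [nrm, nrm, ← Real.sqrt_mul (by positivity)]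
  apply Real.sqrt_le_sqrt
  rw [Finset.sum_mul]
  apply Finset.sum_le_sum
  intro a _
  rw [Matrix.mulVec, dotProduct]
  exact Finset.sum_mul_sq_le_sq_mul_sq Finset.univ _ _

end NormLemmas

section Prob
variable {Z : Type*} [Fintype Z] [DecidableEq Z]


lemma sum_pi_prod {m : ℕ} (g : Fin m → Z → ℝ) :
    ∑ w : Fin m → Z, ∏ i, g i (w i) = ∏ i, ∑ x, g i x := by
  rw [← Fintype.piFinset_univ, Finset.sum_prod_piFinset]

lemma exp_single {m : ℕ} (p : Fin m → Z → ℝ) (hp1 : ∀ j, ∑ x, p j x = 1)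
    (f : Z → ℝ) (i : Fin m) :
    ∑ w : Fin m → Z, (∏ j, p j (w j)) * f (w i) = ∑ x, p i x * f x := by
  have key : ∀ w : Fin m → Z, (∏ j, p j (w j)) * f (w i)
      = ∏ j, (p j (w j) * (if j = i then f (w j) else 1)) := by
    intro w
    rw [Finset.prod_mul_distrib, Finset.prod_ite_eq' Finset.univ i (fun j => f (w j))]
    simp
  rw [Finset.sum_congr rfl fun w _ => key w,
    sum_pi_prod (fun j x => p j x * (if j = i then f x else 1))]
  have hfac : ∀ j : Fin m, ∑ x, p j x * (if j = i then f x else 1)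
      = if j = i then ∑ x, p i x * f x else 1 := by
    intro j
    rcases eq_or_ne j i with h | h
    · subst h; simp
    · simp [h, hp1 j]
  rw [Finset.prod_congr rfl fun j _ => hfac j, Finset.prod_ite_eq' Finset.univ i]
  simp

lemma exp_pair {m : ℕ} (p : Fin m → Z → ℝ) (hp1 : ∀ j, ∑ x, p j x = 1)
    (f g : Z → ℝ) (i k : Fin m) (hik : i ≠ k) :
    ∑ w : Fin m → Z, (∏ j, p j (w j)) * (f (w i) * g (w k))
      = (∑ x, p i x * f x) * (∑ x, p k x * g x) := by
  have key : ∀ w : Fin m → Z, (∏ j, p j (w j)) * (f (w i) * g (w k))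
      = ∏ j, (p j (w j) * ((if j = i then f (w j) else 1) * (if j = k then g (w j) else 1))) := by
    intro w
    rw [Finset.prod_mul_distrib, Finset.prod_mul_distrib,
      Finset.prod_ite_eq' Finset.univ i (fun j => f (w j)),
      Finset.prod_ite_eq' Finset.univ k (fun j => g (w j))]
    simp
  rw [Finset.sum_congr rfl fun w _ => key w,
    sum_pi_prod (fun j x => p j x * ((if j = i then f x else 1) * (if j = k then g x else 1)))]
  have hfac : ∀ j : Fin m, ∑ x, p j x * ((if j = i then f x else 1) * (if j = k then g x else 1))
      = (if j = i then ∑ x, p i x * f x else 1) * (if j = k then ∑ x, p k x * g x else 1) := by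
    intro j
    rcases eq_or_ne j i with h | h
    · subst h; simp [hik]
    · rcases eq_or_ne j k with h2 | h2
      · subst h2; simp [h]
      · simp [h, h2, hp1 j]
  rw [Finset.prod_congr rfl fun j _ => hfac j, Finset.prod_mul_distrib,
    Finset.prod_ite_eq' Finset.univ i, Finset.prod_ite_eq' Finset.univ k]
  simp

lemma pram_var {m : ℕ} (hm : 1 ≤ m) (p : Fin m → Z → ℝ) (hp0 : ∀ j x, 0 ≤ p j x)
    (hp1 : ∀ j, ∑ x, p j x = 1) :
    ∑ w : Fin m → Z, (∏ j, p j (w j)) * ∑ a, (typeOf w a - (∑ i, p i a) / m) ^ 2 ≤ 1 / m := by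
  have hm0 : (0:ℝ) < m := by exact_mod_cast hm
  have hT : ∀ (w : Fin m → Z) (a : Z), typeOf w a - (∑ i, p i a) / m
      = (∑ i, ((if w i = a then (1:ℝ) else 0) - p i a)) / m := by
    intro w a
    have hb : ((Finset.univ.filter fun i => w i = a).card : ℝ)
        = ∑ i, (if w i = a then (1:ℝ) else 0) := by
      rw [Finset.sum_boole]
    rw [typeOf, hb, Finset.sum_sub_distrib, sub_div]
  set Y : Fin m → Z → Z → ℝ := fun i a x => (if x = a then (1:ℝ) else 0) - p i a with hY
  have hmean : ∀ (i : Fin m) (a : Z), ∑ x, p i x * Y i a x = 0 := by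
    intro i a
    simp only [hY, mul_sub, Finset.sum_sub_distrib, mul_ite, mul_one, mul_zero]
    rw [Finset.sum_ite_eq' Finset.univ a (fun x => p i x), ← Finset.sum_mul, hp1 i]
    simp
  have hsecond : ∀ (i : Fin m) (a : Z), ∑ x, p i x * (Y i a x * Y i a x) ≤ p i a := by
    intro i a
    have hexp : ∀ x, p i x * (Y i a x * Y i a x)
        = (if x = a then (1:ℝ) else 0) * p i x * (1 - 2 * p i a) + p i x * (p i a)^2 := by
      intro x
      rcases eq_or_ne x a with h | h
      · subst h
        have : (if x = x then (1:ℝ) else 0) = 1 := by simp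
        simp only [hY, eq_self_iff_true, if_true]; ring
      · simp only [hY, if_neg h]; ring
    rw [Finset.sum_congr rfl fun x _ => hexp x, Finset.sum_add_distrib,
      ← Finset.sum_mul, ← Finset.sum_mul]
    have h1 : ∑ x, (if x = a then (1:ℝ) else 0) * p i x = p i a := by
      simp [Finset.sum_ite_eq' Finset.univ a (fun x => p i x)]
    rw [h1, hp1 i, one_mul]
    nlinarith [hp0 i a]
  have inner : ∀ a : Z, ∑ w : Fin m → Z, (∏ j, p j (w j)) * (typeOf w a - (∑ i, p i a) / m) ^ 2
      = (∑ i, ∑ k, ∑ w : Fin m → Z, (∏ j, p j (w j)) * (Y i a (w i) * Y k a (w k))) / m ^ 2 := by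
    intro a
    have hw : ∀ w : Fin m → Z, (∏ j, p j (w j)) * (typeOf w a - (∑ i, p i a) / m) ^ 2
        = (∑ i, ∑ k, (∏ j, p j (w j)) * (Y i a (w i) * Y k a (w k))) / m ^ 2 := by
      intro w
      rw [hT w a, div_pow, sq, Finset.sum_mul_sum, mul_div_assoc' (∏ j, p j (w j)) _ _]
      congr 1
      rw [Finset.mul_sum]
      apply Finset.sum_congr rfl
      intro i _
      rw [Finset.mul_sum]
    rw [Finset.sum_congr rfl fun w _ => hw w, ← Finset.sum_div]
    congr 1
    rw [Finset.sum_comm]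
    apply Finset.sum_congr rfl
    intro i _
    exact Finset.sum_comm
  have key : ∑ w : Fin m → Z, (∏ j, p j (w j)) * ∑ a, (typeOf w a - (∑ i, p i a) / m) ^ 2
      = (∑ a, ∑ i, ∑ k, ∑ w : Fin m → Z, (∏ j, p j (w j)) * (Y i a (w i) * Y k a (w k))) / m ^ 2 := by
    calc ∑ w : Fin m → Z, (∏ j, p j (w j)) * ∑ a, (typeOf w a - (∑ i, p i a) / m) ^ 2
        = ∑ w : Fin m → Z, ∑ a, (∏ j, p j (w j)) * (typeOf w a - (∑ i, p i a) / m) ^ 2 := by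
          exact Finset.sum_congr rfl fun w _ => Finset.mul_sum _ _ _
      _ = ∑ a, ∑ w : Fin m → Z, (∏ j, p j (w j)) * (typeOf w a - (∑ i, p i a) / m) ^ 2 :=
          Finset.sum_comm
      _ = ∑ a, (∑ i, ∑ k, ∑ w : Fin m → Z, (∏ j, p j (w j)) * (Y i a (w i) * Y k a (w k))) / m ^ 2 :=
          Finset.sum_congr rfl fun a _ => inner a
      _ = _ := (Finset.sum_div _ _ _).symm
  rw [key, div_le_div_iff₀ (by positivity) hm0, one_mul]
  have inner_bound : ∀ (a : Z) (i : Fin m),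
      ∑ k, ∑ w : Fin m → Z, (∏ j, p j (w j)) * (Y i a (w i) * Y k a (w k)) ≤ p i a := by
    intro a i
    have hzero : ∀ k, k ≠ i →
        ∑ w : Fin m → Z, (∏ j, p j (w j)) * (Y i a (w i) * Y k a (w k)) = 0 := by
      intro k hk
      rw [exp_pair p hp1 _ _ i k (Ne.symm hk), hmean i a, zero_mul]
    rw [Finset.sum_eq_single i (fun k _ hk => hzero k hk) (by simp)]
    rw [exp_single p hp1 (fun x => Y i a x * Y i a x) i]
    exact hsecond i a
  have hS : ∑ a, ∑ i, ∑ k, ∑ w : Fin m → Z, (∏ j, p j (w j)) * (Y i a (w i) * Y k a (w k))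
      ≤ (m : ℝ) := by
    calc ∑ a, ∑ i, ∑ k, ∑ w : Fin m → Z, (∏ j, p j (w j)) * (Y i a (w i) * Y k a (w k))
        ≤ ∑ a, ∑ i : Fin m, p i a :=
          Finset.sum_le_sum fun a _ => Finset.sum_le_sum fun i _ => inner_bound a i
      _ = m := by rw [Finset.sum_comm]; simp [hp1]
  calc (∑ a, ∑ i, ∑ k, ∑ w : Fin m → Z, (∏ j, p j (w j)) * (Y i a (w i) * Y k a (w k))) * m
      ≤ m * m := mul_le_mul_of_nonneg_right hS hm0.le
    _ = m ^ 2 := (sq (m:ℝ)).symm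



lemma sum_offDiag_eq {n : ℕ} (g : Fin n → ℝ) :
    ∑ q ∈ (Finset.univ : Finset (Fin n)).offDiag, g q.1 * g q.2
      = (∑ j, g j) ^ 2 - ∑ j, g j ^ 2 := by
  have hdiag : ∑ q ∈ (Finset.univ : Finset (Fin n)).diag, g q.1 * g q.2 = ∑ j, g j ^ 2 := by
    apply Finset.sum_nbij' (fun q => q.1) (fun j => (j, j))
    · intro q hq
      exact Finset.mem_univ _
    · intro j _
      exact Finset.mem_diag.mpr ⟨Finset.mem_univ _, rfl⟩
    · intro q hq
      have := (Finset.mem_diag.mp hq).2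
      exact Prod.ext rfl this
    · intro j _; rfl
    · intro q hq
      have h := (Finset.mem_diag.mp hq).2
      simp [← h, sq]
  have hprod : ∑ q ∈ (Finset.univ : Finset (Fin n)) ×ˢ Finset.univ, g q.1 * g q.2
      = (∑ j, g j) ^ 2 := by
    rw [sq, Finset.sum_mul_sum]
    rw [Finset.sum_product]
  have hunion := Finset.diag_union_offDiag (Finset.univ : Finset (Fin n))
  have hdisj := Finset.disjoint_diag_offDiag (Finset.univ : Finset (Fin n))
  have : ∑ q ∈ (Finset.univ : Finset (Fin n)) ×ˢ Finset.univ, g q.1 * g q.2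
      = ∑ q ∈ (Finset.univ : Finset (Fin n)).diag, g q.1 * g q.2
        + ∑ q ∈ (Finset.univ : Finset (Fin n)).offDiag, g q.1 * g q.2 := by
    rw [← hunion, Finset.sum_union hdisj]
  rw [hprod, hdiag] at this
  linarith

lemma samp_var {m n : ℕ} (hm : 1 ≤ m) (hmn : m ≤ n) (z : Fin n → Z) :
    ∑ π ∈ Theta m n, ∑ a, (typeOf (fun i => z (π i)) a - typeOf z a) ^ 2
      ≤ ((Theta m n).card : ℝ) / m := by
  have hn : 0 < n := lt_of_lt_of_le hm hmn
  have hm0 : (0:ℝ) < m := by exact_mod_cast hm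
  have hn0 : (0:ℝ) < n := by exact_mod_cast hn
  set N : ℝ := ((Theta m n).card : ℝ) with hN
  have hN0 : 0 ≤ N := Nat.cast_nonneg _
  set g : Z → Fin n → ℝ := fun a j => (if z j = a then 1 else 0) - typeOf z a with hg
  have hcard : ∀ a : Z, ((Finset.univ.filter fun j => z j = a).card : ℝ) = n * typeOf z a := by
    intro a
    rw [typeOf]
    field_simp
  have hind : ∀ a : Z, ∑ j, (if z j = a then (1:ℝ) else 0) = n * typeOf z a := by
    intro a
    rw [Finset.sum_boole]
    exact_mod_cast hcard a
  have hzero : ∀ a : Z, ∑ j, g a j = 0 := by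
    intro a
    rw [hg]
    simp only [Finset.sum_sub_distrib, hind a, Finset.sum_const, Finset.card_univ,
      Fintype.card_fin, nsmul_eq_mul]
    ring
  have hdev : ∀ (π : Fin m → Fin n) (a : Z),
      typeOf (fun i => z (π i)) a - typeOf z a = (∑ i, g a (π i)) / m := by
    intro π a
    have h1 : typeOf (fun i => z (π i)) a
        = (∑ i, (if z (π i) = a then (1:ℝ) else 0)) / m := by
      rw [typeOf, Finset.sum_boole]
    rw [h1, hg]
    rw [Finset.sum_sub_distrib]
    simp only [Finset.sum_const, Finset.card_univ, Fintype.card_fin, nsmul_eq_mul]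
    field_simp
  -- interchange
  have key : ∑ π ∈ Theta m n, ∑ a, (typeOf (fun i => z (π i)) a - typeOf z a) ^ 2
      = (∑ a, ∑ i, ∑ k, ∑ π ∈ Theta m n, g a (π i) * g a (π k)) / m ^ 2 := by
    have hπa : ∀ (π : Fin m → Fin n) (a : Z), (typeOf (fun i => z (π i)) a - typeOf z a) ^ 2
        = (∑ i, ∑ k, g a (π i) * g a (π k)) / m ^ 2 := by
      intro π a
      rw [hdev π a, div_pow, sq, Finset.sum_mul_sum]
    calc ∑ π ∈ Theta m n, ∑ a, (typeOf (fun i => z (π i)) a - typeOf z a) ^ 2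
        = ∑ a, ∑ π ∈ Theta m n, (typeOf (fun i => z (π i)) a - typeOf z a) ^ 2 :=
          Finset.sum_comm
      _ = ∑ a, ∑ π ∈ Theta m n, (∑ i, ∑ k, g a (π i) * g a (π k)) / m ^ 2 :=
          Finset.sum_congr rfl fun a _ => Finset.sum_congr rfl fun π _ => hπa π a
      _ = ∑ a, (∑ π ∈ Theta m n, ∑ i, ∑ k, g a (π i) * g a (π k)) / m ^ 2 :=
          Finset.sum_congr rfl fun a _ => (Finset.sum_div _ _ _).symm
      _ = ∑ a, (∑ i, ∑ k, ∑ π ∈ Theta m n, g a (π i) * g a (π k)) / m ^ 2 := by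
          apply Finset.sum_congr rfl
          intro a _
          congr 1
          rw [Finset.sum_comm]
          apply Finset.sum_congr rfl
          intro i _
          exact Finset.sum_comm
      _ = _ := (Finset.sum_div _ _ _).symm
  rw [key]
  -- bound each expectation
  have hEbound : ∀ (a : Z) (i k : Fin m),
      ∑ π ∈ Theta m n, g a (π i) * g a (π k)
        ≤ if k = i then N / n * ∑ j, g a j ^ 2 else 0 := by
    intro a i k
    rcases eq_or_ne k i with h | h
    · subst h
      rw [if_pos rfl]
      have := sum_theta_single hm hmn k (fun j => g a j * g a j)
      rw [this]
      apply le_of_eq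
      congr 1
      exact Finset.sum_congr rfl fun j _ => (sq (g a j)).symm
    · rw [if_neg h]
      rw [sum_theta_pair hmn i k (Ne.symm h) (fun j l => g a j * g a l)]
      rw [sum_offDiag_eq (g a), hzero a]
      have hsq : 0 ≤ ∑ j, g a j ^ 2 := Finset.sum_nonneg fun j _ => sq_nonneg _
      have hm2 : 2 ≤ m := by
        rcases Nat.lt_or_ge m 2 with hc | hc
        · exfalso
          have hi := i.isLt
          have hk := k.isLt
          exact h (Fin.ext (by omega))
        · exact hc
      have hn2 : (2:ℝ) ≤ n := by
        have : 2 ≤ n := le_trans hm2 hmn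
        exact_mod_cast this
      have hpos : (0:ℝ) < (n:ℝ) * ((n:ℝ) - 1) := by nlinarith
      have hdivpos : 0 ≤ N / ((n:ℝ) * ((n:ℝ) - 1)) := div_nonneg hN0 hpos.le
      have : (0:ℝ) ^ 2 - ∑ j, g a j ^ 2 ≤ 0 := by nlinarith
      exact mul_nonpos_of_nonneg_of_nonpos hdivpos this
  -- sum of squares bound
  set S : ℝ := ∑ a, typeOf z a ^ 2 with hS
  have hS0 : 0 ≤ S := Finset.sum_nonneg fun a _ => sq_nonneg _
  have hzsum : ∑ j, typeOf z (z j) = n * S := by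
    have hj : ∀ j : Fin n, typeOf z (z j) = ∑ a, (if z j = a then (1:ℝ) else 0) * typeOf z a := by
      intro j
      have hw : ∀ a : Z, (if z j = a then (1:ℝ) else 0) * typeOf z a
          = if z j = a then typeOf z a else 0 := fun a => by split <;> simp
      rw [Finset.sum_congr rfl fun a _ => hw a, Finset.sum_ite_eq]
      simp
    rw [Finset.sum_congr rfl fun j _ => hj j, Finset.sum_comm]
    rw [hS, Finset.mul_sum]
    apply Finset.sum_congr rfl
    intro a _
    rw [← Finset.sum_mul, hind a, sq]
    ring
  have habound : ∑ a, ∑ j, g a j ^ 2 ≤ (n:ℝ) := by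
    have hja : ∀ j : Fin n, ∑ a, g a j ^ 2 = 1 - 2 * typeOf z (z j) + S := by
      intro j
      have hexp : ∀ a : Z, g a j ^ 2
          = (if z j = a then (1:ℝ) else 0) * (1 - 2 * typeOf z a) + typeOf z a ^ 2 := by
        intro a
        rw [hg]
        rcases eq_or_ne (z j) a with hc | hc
        · simp only [if_pos hc]; ring
        · simp only [if_neg hc]; ring
      rw [Finset.sum_congr rfl fun a _ => hexp a, Finset.sum_add_distrib, ← hS]
      congr 1
      have hw : ∀ a : Z, (if z j = a then (1:ℝ) else 0) * (1 - 2 * typeOf z a)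
          = if z j = a then 1 - 2 * typeOf z a else 0 := fun a => by split <;> simp
      rw [Finset.sum_congr rfl fun a _ => hw a, Finset.sum_ite_eq]
      simp
    rw [Finset.sum_comm, Finset.sum_congr rfl fun j _ => hja j]
    rw [Finset.sum_add_distrib, Finset.sum_sub_distrib]
    simp only [Finset.sum_const, Finset.card_univ, Fintype.card_fin, nsmul_eq_mul, mul_one,
      ← Finset.mul_sum]
    rw [Finset.sum_congr rfl fun j _ => rfl, hzsum]
    nlinarith
  -- final assembly
  have hX : ∑ a, ∑ i, ∑ k, ∑ π ∈ Theta m n, g a (π i) * g a (π k) ≤ m * N := by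
    have h1 : ∀ (a : Z) (i : Fin m), ∑ k, ∑ π ∈ Theta m n, g a (π i) * g a (π k)
        ≤ N / n * ∑ j, g a j ^ 2 := by
      intro a i
      calc ∑ k, ∑ π ∈ Theta m n, g a (π i) * g a (π k)
          ≤ ∑ k, if k = i then N / n * ∑ j, g a j ^ 2 else 0 :=
            Finset.sum_le_sum fun k _ => hEbound a i k
        _ = N / n * ∑ j, g a j ^ 2 := by
            rw [Finset.sum_ite_eq' Finset.univ i (fun _ => N / n * ∑ j, g a j ^ 2)]
            simp
    calc ∑ a, ∑ i, ∑ k, ∑ π ∈ Theta m n, g a (π i) * g a (π k)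
        ≤ ∑ a, ∑ i : Fin m, N / n * ∑ j, g a j ^ 2 :=
          Finset.sum_le_sum fun a _ => Finset.sum_le_sum fun i _ => h1 a i
      _ = m * (N / n * ∑ a, ∑ j, g a j ^ 2) := by
          rw [Finset.sum_comm]
          simp only [Finset.sum_const, Finset.card_univ, Fintype.card_fin, nsmul_eq_mul]
          rw [← Finset.mul_sum]
      _ ≤ m * (N / n * n) := by
          apply mul_le_mul_of_nonneg_left _ hm0.le
          exact mul_le_mul_of_nonneg_left habound (div_nonneg hN0 hn0.le)
      _ = m * N := by field_simp
  calc (∑ a, ∑ i, ∑ k, ∑ π ∈ Theta m n, g a (π i) * g a (π k)) / m ^ 2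
      ≤ (m * N) / m ^ 2 := (div_le_div_iff_of_pos_right (by positivity)).mpr hX
    _ = N / m := by
        rw [sq]
        field_simp


end Prob
end Aux

/-- Utility of the sampling-then-PRAM mechanism: sampling `m` of `n` entries
uniformly without replacement, perturbing each sampled symbol independently by
the γ-diagonal matrix `A`, and estimating the type by `A⁻¹·T_Ŵ` gives expected
ℓ2 error at most `(c·√D + 1)/√m`, with `c = 1 + D/(γ-1)` the ℓ2 condition
number of `A`. -/
theorem sampling_pram_utility_bound
    {Z : Type*} [Fintype Z] [DecidableEq Z] (hD : 1 ≤ Fintype.card Z)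
    (γ : ℝ) (hγ : 1 < γ) (m n : ℕ) (hm : 1 ≤ m) (hmn : m ≤ n) (z : Fin n → Z) :
    letI D : ℝ := (Fintype.card Z : ℝ)
    letI A : Matrix Z Z ℝ := Matrix.of (gammaDiag γ)
    letI c : ℝ := 1 + D / (γ - 1)
    (1 / ((Theta m n).card : ℝ)) * ∑ π ∈ Theta m n, ∑ what : Fin m → Z,
        (∏ i, gammaDiag γ (what i) (z (π i))) *
          Real.sqrt (∑ w : Z, (A⁻¹.mulVec (typeOf what) w - typeOf z w) ^ 2)
      ≤ (c * Real.sqrt D + 1) / Real.sqrt m := by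
  show (1 / ((Theta m n).card : ℝ)) * ∑ π ∈ Theta m n, ∑ what : Fin m → Z,
        (∏ i, gammaDiag γ (what i) (z (π i))) *
          Real.sqrt (∑ w : Z, ((Matrix.of (gammaDiag γ) : Matrix Z Z ℝ)⁻¹.mulVec (typeOf what) w
            - typeOf z w) ^ 2)
      ≤ ((1 + (Fintype.card Z : ℝ) / (γ - 1)) * Real.sqrt (Fintype.card Z : ℝ) + 1) / Real.sqrt m
  set Dr : ℝ := (Fintype.card Z : ℝ) with hDr
  have hD1 : (1:ℝ) ≤ Dr := by
    rw [hDr]; exact_mod_cast hD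
  have hγ1 : (0:ℝ) < γ - 1 := by linarith
  have hq0 : (0:ℝ) < γ + Dr - 1 := by linarith
  have hm0 : (0:ℝ) < m := by exact_mod_cast hm
  have hsm : (0:ℝ) < Real.sqrt m := Real.sqrt_pos.mpr hm0
  set B : Matrix Z Z ℝ := Bmat Z γ with hB
  have hAB := AB_eq_one hD hγ
  have hAinv : (Matrix.of (gammaDiag γ) : Matrix Z Z ℝ)⁻¹ = B :=
    Matrix.inv_eq_right_inv hAB
  have hBA : B * (Matrix.of (gammaDiag γ) : Matrix Z Z ℝ) = 1 :=
    mul_eq_one_comm.mp hAB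
  have hBmulA : ∀ v : Z → ℝ, B.mulVec ((Matrix.of (gammaDiag γ) : Matrix Z Z ℝ).mulVec v) = v := by
    intro v
    rw [Matrix.mulVec_mulVec, hBA, Matrix.one_mulVec]
  set c : ℝ := 1 + Dr / (γ - 1) with hc
  have hc_eq : c = (γ + Dr - 1) / (γ - 1) := by rw [hc]; field_simp; ring
  have hc0 : 0 ≤ c := by rw [hc]; positivity
  rw [hAinv]
  have hBdiag : ∀ a : Z, B a a = (γ + Dr - 2) / (γ - 1) := by
    intro a; rw [hB]; simp [Bmat, ← hDr]
  have hBoff : ∀ a b : Z, a ≠ b → B a b = (-1) / (γ - 1) := by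
    intro a b h; rw [hB]; simp [Bmat, h, ← hDr]
  -- Frobenius bound for B
  have hFro2 : ∑ a : Z, ∑ b : Z, B a b ^ 2 ≤ Dr * ((γ + Dr - 1) / (γ - 1)) ^ 2 := by
    have hrow : ∀ a : Z, ∑ b : Z, B a b ^ 2
        = (Dr - 1) / (γ-1)^2 + ((γ + Dr - 2)/(γ-1)) ^ 2 := by
      intro a
      have hterm : ∀ b : Z, B a b ^ 2
          = 1/(γ-1)^2 + (if b = a then ((γ + Dr - 2)/(γ-1))^2 - 1/(γ-1)^2 else 0) := by
        intro b
        rcases eq_or_ne b a with h | h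
        · subst h
          rw [hBdiag b, if_pos rfl]
          ring
        · rw [hBoff a b (Ne.symm h), if_neg h]
          field_simp
          ring
      rw [Finset.sum_congr rfl fun b _ => hterm b, Finset.sum_add_distrib,
        Finset.sum_ite_eq' Finset.univ a]
      simp only [Finset.mem_univ, if_true, Finset.sum_const, Finset.card_univ, nsmul_eq_mul]
      rw [← hDr]
      field_simp
      ring
    rw [Finset.sum_congr rfl fun a _ => hrow a, Finset.sum_const, Finset.card_univ, nsmul_eq_mul,
      ← hDr]
    have hineq : (Dr - 1) / (γ-1)^2 + ((γ + Dr - 2)/(γ-1)) ^ 2 ≤ ((γ + Dr - 1) / (γ - 1)) ^ 2 := by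
      rw [div_pow, div_pow, ← add_div, div_le_div_iff₀ (by positivity) (by positivity)]
      nlinarith
    have h0 : (0:ℝ) ≤ Dr := by linarith
    exact mul_le_mul_of_nonneg_left hineq h0
  set Fro : ℝ := Real.sqrt (∑ a : Z, ∑ b : Z, B a b ^ 2) with hFrodef
  have hFro0 : 0 ≤ Fro := Real.sqrt_nonneg _
  have hFro : Fro ≤ c * Real.sqrt Dr := by
    calc Fro
        ≤ Real.sqrt (Dr * ((γ + Dr - 1) / (γ - 1)) ^ 2) := Real.sqrt_le_sqrt hFro2
      _ = (γ + Dr - 1) / (γ - 1) * Real.sqrt Dr := by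
          rw [Real.sqrt_mul (by linarith), Real.sqrt_sq (by positivity)]
          ring
      _ = c * Real.sqrt Dr := by rw [hc_eq]
  -- gammaDiag is column-stochastic
  have hgd0 : ∀ w z0 : Z, 0 ≤ gammaDiag γ w z0 := by
    intro w z0
    rw [gammaDiag, ← hDr]
    split <;> positivity
  have hgd1 : ∀ z0 : Z, ∑ w : Z, gammaDiag γ w z0 = 1 := by
    intro z0
    have hsplit : ∀ w : Z, gammaDiag γ w z0
        = 1/(γ + Dr - 1) + (if w = z0 then (γ-1)/(γ + Dr - 1) else 0) := by
      intro w
      rw [gammaDiag, ← hDr]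
      rcases eq_or_ne w z0 with h | h
      · rw [if_pos h, if_pos h]
        field_simp
        ring
      · rw [if_neg h, if_neg h, add_zero]
    rw [Finset.sum_congr rfl fun w _ => hsplit w, Finset.sum_add_distrib,
      Finset.sum_ite_eq' Finset.univ z0, Finset.sum_const, Finset.card_univ, nsmul_eq_mul, ← hDr]
    simp only [Finset.mem_univ, if_true]
    field_simp
    ring
  -- cardinality of Theta
  set N : ℝ := ((Theta m n).card : ℝ) with hN
  have hN0 : 0 < N := by
    rw [hN]
    exact_mod_cast Finset.card_pos.mpr (Theta_nonempty hmn)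
  -- per-sample inner bound
  have hinner : ∀ π ∈ Theta m n,
      ∑ what : Fin m → Z, (∏ i, gammaDiag γ (what i) (z (π i))) *
          Real.sqrt (∑ w : Z, (B.mulVec (typeOf what) w - typeOf z w) ^ 2)
        ≤ c * Real.sqrt Dr / Real.sqrt m
          + Real.sqrt (∑ a : Z, (typeOf (fun i => z (π i)) a - typeOf z a) ^ 2) := by
    intro π _
    set p : Fin m → Z → ℝ := fun i x => gammaDiag γ x (z (π i)) with hp
    have hp0 : ∀ j x, 0 ≤ p j x := fun j x => hgd0 x (z (π j))
    have hp1 : ∀ j, ∑ x, p j x = 1 := fun j => hgd1 (z (π j))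
    set μ : Z → ℝ := fun a => (∑ i, p i a) / m with hμdef
    have hμ : (Matrix.of (gammaDiag γ) : Matrix Z Z ℝ).mulVec (typeOf (fun i => z (π i))) = μ := by
      funext a
      rw [Matrix.mulVec, dotProduct, hμdef]
      have hTb : ∀ b : Z, typeOf (fun i => z (π i)) b
          = (∑ i, if z (π i) = b then (1:ℝ) else 0) / m := by
        intro b
        rw [typeOf, Finset.sum_boole]
      have hterm : ∀ b : Z, (Matrix.of (gammaDiag γ) : Matrix Z Z ℝ) a b
            * typeOf (fun i => z (π i)) b
          = (∑ i, if z (π i) = b then gammaDiag γ a b else 0) / m := by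
        intro b
        rw [hTb b, mul_div_assoc', Finset.mul_sum]
        congr 1
        apply Finset.sum_congr rfl
        intro i _
        split <;> simp
      rw [Finset.sum_congr rfl fun b _ => hterm b, ← Finset.sum_div]
      congr 1
      rw [Finset.sum_comm]
      apply Finset.sum_congr rfl
      intro i _
      rw [Finset.sum_ite_eq Finset.univ (z (π i)) (fun b => gammaDiag γ a b)]
      simp [hp]
    have hBμ : B.mulVec μ = typeOf (fun i => z (π i)) := by rw [← hμ, hBmulA]
    -- pointwise triangle inequality
    have htri : ∀ what : Fin m → Z,
        Real.sqrt (∑ w : Z, (B.mulVec (typeOf what) w - typeOf z w) ^ 2)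
          ≤ nrm (B.mulVec (fun b => typeOf what b - μ b))
            + Real.sqrt (∑ a : Z, (typeOf (fun i => z (π i)) a - typeOf z a) ^ 2) := by
      intro what
      have h1 : (fun w => B.mulVec (typeOf what) w - typeOf z w)
          = B.mulVec (fun b => typeOf what b - μ b)
            + (fun a => typeOf (fun i => z (π i)) a - typeOf z a) := by
        funext w
        have h2 : (fun b => typeOf what b - μ b) = typeOf what - μ := rfl
        rw [Pi.add_apply, h2, Matrix.mulVec_sub]
        have h3 := congrFun hBμ w
        simp only [Pi.sub_apply, h3]
        ring
      have h4 : Real.sqrt (∑ w : Z, (B.mulVec (typeOf what) w - typeOf z w) ^ 2)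
          = nrm (fun w => B.mulVec (typeOf what) w - typeOf z w) := rfl
      have h5 : Real.sqrt (∑ a : Z, (typeOf (fun i => z (π i)) a - typeOf z a) ^ 2)
          = nrm (fun a => typeOf (fun i => z (π i)) a - typeOf z a) := rfl
      rw [h4, h5, h1]
      exact nrm_triangle _ _
    have hP0 : ∀ what : Fin m → Z, 0 ≤ ∏ i, gammaDiag γ (what i) (z (π i)) :=
      fun what => Finset.prod_nonneg fun i _ => hgd0 _ _
    have hP1 : ∑ what : Fin m → Z, ∏ i, gammaDiag γ (what i) (z (π i)) = 1 := by
      have he : ∀ what : Fin m → Z, (∏ i, gammaDiag γ (what i) (z (π i)))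
          = ∏ i, p i (what i) := by intro what; rfl
      rw [Finset.sum_congr rfl fun what _ => he what, sum_pi_prod p]
      rw [Finset.prod_congr rfl fun i _ => hp1 i]
      simp
    -- the PRAM variance bound
    have hA3 : ∑ what : Fin m → Z, (∏ i, gammaDiag γ (what i) (z (π i)))
        * ∑ a, (typeOf what a - μ a) ^ 2 ≤ 1 / m := pram_var hm p hp0 hp1
    -- Jensen
    have hA2 : ∑ what : Fin m → Z, (∏ i, gammaDiag γ (what i) (z (π i)))
        * nrm (fun b => typeOf what b - μ b)
        ≤ Real.sqrt (∑ what : Fin m → Z, (∏ i, gammaDiag γ (what i) (z (π i)))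
            * ∑ a, (typeOf what a - μ a) ^ 2) := by
      apply sum_sqrt_le Finset.univ _ _ (fun what _ => hP0 what) hP1
      intro what _
      exact Finset.sum_nonneg fun a _ => sq_nonneg _
    have hA2' : ∑ what : Fin m → Z, (∏ i, gammaDiag γ (what i) (z (π i)))
        * nrm (fun b => typeOf what b - μ b) ≤ Real.sqrt (1 / m) :=
      le_trans hA2 (Real.sqrt_le_sqrt hA3)
    calc ∑ what : Fin m → Z, (∏ i, gammaDiag γ (what i) (z (π i))) *
            Real.sqrt (∑ w : Z, (B.mulVec (typeOf what) w - typeOf z w) ^ 2)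
        ≤ ∑ what : Fin m → Z, (∏ i, gammaDiag γ (what i) (z (π i))) *
            (nrm (B.mulVec (fun b => typeOf what b - μ b))
              + Real.sqrt (∑ a : Z, (typeOf (fun i => z (π i)) a - typeOf z a) ^ 2)) :=
          Finset.sum_le_sum fun what _ =>
            mul_le_mul_of_nonneg_left (htri what) (hP0 what)
      _ = ∑ what : Fin m → Z, (∏ i, gammaDiag γ (what i) (z (π i))) *
            nrm (B.mulVec (fun b => typeOf what b - μ b))
          + Real.sqrt (∑ a : Z, (typeOf (fun i => z (π i)) a - typeOf z a) ^ 2) := by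
          rw [Finset.sum_congr rfl fun what _ => mul_add _ _ _, Finset.sum_add_distrib,
            ← Finset.sum_mul, hP1, one_mul]
      _ ≤ c * Real.sqrt Dr / Real.sqrt m
          + Real.sqrt (∑ a : Z, (typeOf (fun i => z (π i)) a - typeOf z a) ^ 2) := by
          apply add_le_add_left
          calc ∑ what : Fin m → Z, (∏ i, gammaDiag γ (what i) (z (π i))) *
                  nrm (B.mulVec (fun b => typeOf what b - μ b))
              ≤ ∑ what : Fin m → Z, (∏ i, gammaDiag γ (what i) (z (π i))) *
                  (Fro * nrm (fun b => typeOf what b - μ b)) :=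
                Finset.sum_le_sum fun what _ =>
                  mul_le_mul_of_nonneg_left (nrm_mulVec_le B _) (hP0 what)
            _ = Fro * ∑ what : Fin m → Z, (∏ i, gammaDiag γ (what i) (z (π i))) *
                  nrm (fun b => typeOf what b - μ b) := by
                rw [Finset.mul_sum]
                apply Finset.sum_congr rfl
                intro what _
                ring
            _ ≤ Fro * Real.sqrt (1 / m) := mul_le_mul_of_nonneg_left hA2' hFro0
            _ = Fro / Real.sqrt m := by
                rw [one_div, Real.sqrt_inv, ← div_eq_mul_inv]
            _ ≤ c * Real.sqrt Dr / Real.sqrt m := (div_le_div_iff_of_pos_right hsm).mpr hFro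
  -- outer expectation over Theta
  have hsamp := samp_var hm hmn z
  have hdev2 : ∑ π ∈ Theta m n,
      Real.sqrt (∑ a : Z, (typeOf (fun i => z (π i)) a - typeOf z a) ^ 2)
      ≤ N * (1 / Real.sqrt m) := by
    have hjensen : ∑ π ∈ Theta m n, (1 / N) *
        Real.sqrt (∑ a : Z, (typeOf (fun i => z (π i)) a - typeOf z a) ^ 2)
        ≤ Real.sqrt (∑ π ∈ Theta m n, (1 / N) *
            ∑ a : Z, (typeOf (fun i => z (π i)) a - typeOf z a) ^ 2) := by
      apply sum_sqrt_le (Theta m n) _ _ (fun π _ => by positivity)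
      · rw [Finset.sum_const, nsmul_eq_mul, ← hN]
        field_simp
      · intro π _
        exact Finset.sum_nonneg fun a _ => sq_nonneg _
    have hsum2 : ∑ π ∈ Theta m n, (1 / N) *
        ∑ a : Z, (typeOf (fun i => z (π i)) a - typeOf z a) ^ 2 ≤ 1 / m := by
      rw [← Finset.mul_sum]
      calc (1 / N) * ∑ π ∈ Theta m n, ∑ a : Z, (typeOf (fun i => z (π i)) a - typeOf z a) ^ 2
          ≤ (1 / N) * (N / m) := by
            apply mul_le_mul_of_nonneg_left _ (by positivity)
            exact hsamp
        _ = 1 / m := by field_simp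
    have h6 : ∑ π ∈ Theta m n, (1 / N) *
        Real.sqrt (∑ a : Z, (typeOf (fun i => z (π i)) a - typeOf z a) ^ 2)
        ≤ 1 / Real.sqrt m := by
      refine le_trans hjensen (le_trans (Real.sqrt_le_sqrt hsum2) ?_)
      rw [one_div, Real.sqrt_inv, one_div]
    have h7 : ∑ π ∈ Theta m n,
        Real.sqrt (∑ a : Z, (typeOf (fun i => z (π i)) a - typeOf z a) ^ 2)
        = N * ∑ π ∈ Theta m n, (1 / N) *
            Real.sqrt (∑ a : Z, (typeOf (fun i => z (π i)) a - typeOf z a) ^ 2) := by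
      rw [Finset.mul_sum]
      apply Finset.sum_congr rfl
      intro π _
      field_simp
    rw [h7]
    exact mul_le_mul_of_nonneg_left h6 hN0.le
  have houter : ∑ π ∈ Theta m n, ∑ what : Fin m → Z,
      (∏ i, gammaDiag γ (what i) (z (π i))) *
        Real.sqrt (∑ w : Z, (B.mulVec (typeOf what) w - typeOf z w) ^ 2)
      ≤ N * (c * Real.sqrt Dr / Real.sqrt m) + N * (1 / Real.sqrt m) := by
    calc ∑ π ∈ Theta m n, ∑ what : Fin m → Z,
          (∏ i, gammaDiag γ (what i) (z (π i))) *
            Real.sqrt (∑ w : Z, (B.mulVec (typeOf what) w - typeOf z w) ^ 2)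
        ≤ ∑ π ∈ Theta m n, (c * Real.sqrt Dr / Real.sqrt m
            + Real.sqrt (∑ a : Z, (typeOf (fun i => z (π i)) a - typeOf z a) ^ 2)) :=
          Finset.sum_le_sum hinner
      _ = N * (c * Real.sqrt Dr / Real.sqrt m) + ∑ π ∈ Theta m n,
            Real.sqrt (∑ a : Z, (typeOf (fun i => z (π i)) a - typeOf z a) ^ 2) := by
          rw [Finset.sum_add_distrib, Finset.sum_const, nsmul_eq_mul, ← hN]
      _ ≤ N * (c * Real.sqrt Dr / Real.sqrt m) + N * (1 / Real.sqrt m) :=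
          add_le_add_right hdev2 _
  calc (1 / N) * ∑ π ∈ Theta m n, ∑ what : Fin m → Z,
        (∏ i, gammaDiag γ (what i) (z (π i))) *
          Real.sqrt (∑ w : Z, (B.mulVec (typeOf what) w - typeOf z w) ^ 2)
      ≤ (1 / N) * (N * (c * Real.sqrt Dr / Real.sqrt m) + N * (1 / Real.sqrt m)) :=
        mul_le_mul_of_nonneg_left houter (by positivity)
    _ = c * Real.sqrt Dr / Real.sqrt m + 1 / Real.sqrt m := by
        rw [mul_add,
          show (1/N) * (N * (c * Real.sqrt Dr / Real.sqrt m)) = c * Real.sqrt Dr / Real.sqrt m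
            from by field_simp,
          show (1/N) * (N * (1 / Real.sqrt m)) = 1 / Real.sqrt m from by field_simp]
    _ = (c * Real.sqrt Dr + 1) / Real.sqrt m := by rw [← add_div]
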